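/- Let V₁ be a 2-dimensional vector space over F₃ with basis x₁, y₁. Then the three vectors x₁⊗x₁, y₁⊗y₁, x₁⊗y₁ in V₁⊗V₁ form a base for the group GL(V₁) ≀_c S₂ acting on V₁⊗V₁: any element of this group fixing all three vectors is the identity. -/

import Mathlib

open scoped TensorProduct

/-- If `V₁` is a 2-dimensional space over `F₃` with basis
`x₁, y₁`, then `x₁⊗x₁`, `y₁⊗y₁`, `x₁⊗y₁` form a base for `GL(V₁) ≀_c S₂`
(the subgroup of `GL(V₁⊗V₁)` generated by all `g⊗h` and the swap). -/
theorem stmt_11 {V : Type*} [AddCommGroup V] [Module (ZMod 3) V]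
    (hdim : Module.finrank (ZMod 3) V = 2)
    (x₁ y₁ : V) (hbasis : LinearIndependent (ZMod 3) ![x₁, y₁])
    (hspan : Submodule.span (ZMod 3) {x₁, y₁} = ⊤) :
    ∀ u ∈ Subgroup.closure
      ({u : (Module.End (ZMod 3) (V ⊗[ZMod 3] V))ˣ |
          ∃ g h : (Module.End (ZMod 3) V)ˣ,
            (u : Module.End (ZMod 3) (V ⊗[ZMod 3] V)) =
              TensorProduct.map (g : Module.End (ZMod 3) V)
                (h : Module.End (ZMod 3) V)} ∪
        {u : (Module.End (ZMod 3) (V ⊗[ZMod 3] V))ˣ |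
          (u : Module.End (ZMod 3) (V ⊗[ZMod 3] V)) =
            (TensorProduct.comm (ZMod 3) V V).toLinearMap}),
      (u : Module.End (ZMod 3) (V ⊗[ZMod 3] V)) (x₁ ⊗ₜ[ZMod 3] x₁) =
          x₁ ⊗ₜ[ZMod 3] x₁ →
      (u : Module.End (ZMod 3) (V ⊗[ZMod 3] V)) (y₁ ⊗ₜ[ZMod 3] y₁) =
          y₁ ⊗ₜ[ZMod 3] y₁ →
      (u : Module.End (ZMod 3) (V ⊗[ZMod 3] V)) (x₁ ⊗ₜ[ZMod 3] y₁) =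
          x₁ ⊗ₜ[ZMod 3] y₁ →
      u = 1 := by
  classical
  intro u hu hxx hyy hxy
  -- a basis of V
  have hrange : Set.range ![x₁, y₁] = {x₁, y₁} := by
    ext v
    simp [Fin.exists_fin_two, or_comm]
  let b : Module.Basis (Fin 2) (ZMod 3) V :=
    Module.Basis.mk hbasis (by rw [hrange, hspan])
  have hb0 : b 0 = x₁ := by simp [b, Module.Basis.mk_apply]
  have hb1 : b 1 = y₁ := by simp [b, Module.Basis.mk_apply]
  set σ : Module.End (ZMod 3) (V ⊗[ZMod 3] V) :=
    (TensorProduct.comm (ZMod 3) V V).toLinearMap with hσ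
  have hσapp : ∀ v w : V, σ (v ⊗ₜ[ZMod 3] w) = w ⊗ₜ[ZMod 3] v := by
    intro v w; simp [hσ]
  have hσσ : σ * σ = 1 := by
    apply TensorProduct.ext'
    intro v w
    simp [Module.End.mul_apply, hσapp]
  have hswap : ∀ g h : Module.End (ZMod 3) V,
      σ * TensorProduct.map g h = TensorProduct.map h g * σ := by
    intro g h
    apply TensorProduct.ext'
    intro v w
    simp [Module.End.mul_apply, hσapp]
  -- the subgroup of elements of the form g⊗h or (g⊗h)∘σ
  let S : Subgroup (Module.End (ZMod 3) (V ⊗[ZMod 3] V))ˣ :=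
  { carrier := {u | ∃ g h : (Module.End (ZMod 3) V)ˣ,
      (u : Module.End (ZMod 3) (V ⊗[ZMod 3] V)) =
        TensorProduct.map (g : Module.End (ZMod 3) V) (h : Module.End (ZMod 3) V) ∨
      (u : Module.End (ZMod 3) (V ⊗[ZMod 3] V)) =
        TensorProduct.map (g : Module.End (ZMod 3) V) (h : Module.End (ZMod 3) V) * σ}
    one_mem' := ⟨1, 1, Or.inl (by simp [TensorProduct.map_one])⟩
    mul_mem' := by
      rintro a c ⟨g, h, ha | ha⟩ ⟨g', h', hc | hc⟩
      · exact ⟨g * g', h * h', Or.inl (by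
          rw [Units.val_mul, ha, hc, Units.val_mul, Units.val_mul,
            TensorProduct.map_mul])⟩
      · exact ⟨g * g', h * h', Or.inr (by
          rw [Units.val_mul, ha, hc, Units.val_mul, Units.val_mul,
            TensorProduct.map_mul, mul_assoc])⟩
      · refine ⟨g * h', h * g', Or.inr ?_⟩
        rw [Units.val_mul, ha, hc, Units.val_mul, Units.val_mul]
        apply TensorProduct.ext'
        intro v w
        simp [Module.End.mul_apply, hσapp]
      · refine ⟨g * h', h * g', Or.inl ?_⟩
        rw [Units.val_mul, ha, hc, Units.val_mul, Units.val_mul]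
        apply TensorProduct.ext'
        intro v w
        simp [Module.End.mul_apply, hσapp]
    inv_mem' := by
      rintro a ⟨g, h, ha | ha⟩
      · refine ⟨g⁻¹, h⁻¹, Or.inl ?_⟩
        have h1 : (a : Module.End (ZMod 3) (V ⊗[ZMod 3] V)) *
            TensorProduct.map ((g⁻¹ : _ˣ) : Module.End (ZMod 3) V)
              ((h⁻¹ : _ˣ) : Module.End (ZMod 3) V) = 1 := by
          rw [ha]
          have hginv : ∀ v, (g : Module.End (ZMod 3) V)
              (((g⁻¹ : (Module.End (ZMod 3) V)ˣ) : Module.End (ZMod 3) V) v) = v := by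
            intro v
            rw [← Module.End.mul_apply, ← Units.val_mul, mul_inv_cancel,
              Units.val_one, Module.End.one_apply]
          have hhinv : ∀ v, (h : Module.End (ZMod 3) V)
              (((h⁻¹ : (Module.End (ZMod 3) V)ˣ) : Module.End (ZMod 3) V) v) = v := by
            intro v
            rw [← Module.End.mul_apply, ← Units.val_mul, mul_inv_cancel,
              Units.val_one, Module.End.one_apply]
          apply TensorProduct.ext'
          intro v w
          simp [Module.End.mul_apply, hginv, hhinv]
        calc ((a⁻¹ : _ˣ) : Module.End (ZMod 3) (V ⊗[ZMod 3] V))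
            = ↑a⁻¹ * ((a : Module.End (ZMod 3) (V ⊗[ZMod 3] V)) *
              TensorProduct.map ((g⁻¹ : _ˣ) : Module.End (ZMod 3) V)
                ((h⁻¹ : _ˣ) : Module.End (ZMod 3) V)) := by rw [h1, mul_one]
          _ = _ := by rw [← mul_assoc, Units.inv_mul, one_mul]
      · refine ⟨h⁻¹, g⁻¹, Or.inr ?_⟩
        have h1 : (a : Module.End (ZMod 3) (V ⊗[ZMod 3] V)) *
            (TensorProduct.map ((h⁻¹ : _ˣ) : Module.End (ZMod 3) V)
              ((g⁻¹ : _ˣ) : Module.End (ZMod 3) V) * σ) = 1 := by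
          rw [ha]
          have hginv : ∀ v, (g : Module.End (ZMod 3) V)
              (((g⁻¹ : (Module.End (ZMod 3) V)ˣ) : Module.End (ZMod 3) V) v) = v := by
            intro v
            rw [← Module.End.mul_apply, ← Units.val_mul, mul_inv_cancel,
              Units.val_one, Module.End.one_apply]
          have hhinv : ∀ v, (h : Module.End (ZMod 3) V)
              (((h⁻¹ : (Module.End (ZMod 3) V)ˣ) : Module.End (ZMod 3) V) v) = v := by
            intro v
            rw [← Module.End.mul_apply, ← Units.val_mul, mul_inv_cancel,
              Units.val_one, Module.End.one_apply]
          apply TensorProduct.ext'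
          intro v w
          simp [Module.End.mul_apply, hσapp, hginv, hhinv]
        calc ((a⁻¹ : _ˣ) : Module.End (ZMod 3) (V ⊗[ZMod 3] V))
            = ↑a⁻¹ * ((a : Module.End (ZMod 3) (V ⊗[ZMod 3] V)) *
              (TensorProduct.map ((h⁻¹ : _ˣ) : Module.End (ZMod 3) V)
                ((g⁻¹ : _ˣ) : Module.End (ZMod 3) V) * σ)) := by rw [h1, mul_one]
          _ = _ := by rw [← mul_assoc, Units.inv_mul, one_mul] }
  have hS : u ∈ S := by
    refine (Subgroup.closure_le S).mpr ?_ hu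
    rintro w (⟨g, h, hw⟩ | hw)
    · exact ⟨g, h, Or.inl hw⟩
    · exact ⟨1, 1, Or.inr (by rw [hw]; simp [TensorProduct.map_one])⟩
  obtain ⟨g, h, hcase⟩ := hS
  -- coefficient extraction tool
  have key : ∀ v w v' w' : V, v ⊗ₜ[ZMod 3] w = v' ⊗ₜ[ZMod 3] w' → ∀ i j : Fin 2,
      b.repr v i * b.repr w j = b.repr v' i * b.repr w' j := by
    intro v w v' w' hvw i j
    have := congrArg (fun z => (b.tensorProduct b).repr z (i, j)) hvw
    simp only [Module.Basis.tensorProduct_repr_tmul_apply] at this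
    rw [mul_comm, mul_comm (b.repr v' i)]
    exact this
  have hrx0 : b.repr x₁ 0 = 1 := by rw [← hb0, b.repr_self]; simp
  have hrx1 : b.repr x₁ 1 = 0 := by rw [← hb0, b.repr_self]; simp
  have hry0 : b.repr y₁ 0 = 0 := by rw [← hb1, b.repr_self]; simp
  have hry1 : b.repr y₁ 1 = 1 := by rw [← hb1, b.repr_self]; simp
  have hrep : ∀ v : V, v = b.repr v 0 • x₁ + b.repr v 1 • y₁ := by
    intro v
    have := b.sum_repr v
    rw [Fin.sum_univ_two, hb0, hb1] at this
    exact this.symm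
  set G : Module.End (ZMod 3) V := (g : Module.End (ZMod 3) V) with hG
  set H : Module.End (ZMod 3) V := (h : Module.End (ZMod 3) V) with hH
  set A0 := b.repr (G x₁) 0 with hA0
  set A1 := b.repr (G x₁) 1 with hA1
  set B0 := b.repr (H x₁) 0 with hB0
  set B1 := b.repr (H x₁) 1 with hB1
  set C0 := b.repr (G y₁) 0 with hC0
  set C1 := b.repr (G y₁) 1 with hC1
  set D0 := b.repr (H y₁) 0 with hD0
  set D1 := b.repr (H y₁) 1 with hD1
  rcases hcase with hcase | hcase
  · -- u = g ⊗ h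
    rw [hcase, TensorProduct.map_tmul] at hxx hyy hxy
    have e1 := key _ _ _ _ hxx
    have e2 := key _ _ _ _ hyy
    have e3 := key _ _ _ _ hxy
    have e100 := e1 0 0; have e101 := e1 0 1; have e110 := e1 1 0
    have e211 := e2 1 1; have e201 := e2 0 1; have e210 := e2 1 0
    have e301 := e3 0 1; have e300 := e3 0 0; have e311 := e3 1 1
    simp only [← hA0, ← hA1, ← hB0, ← hB1, ← hC0, ← hC1, ← hD0, ← hD1,
      hrx0, hrx1, hry0, hry1, mul_one, mul_zero, zero_mul, one_mul] at e100 e101 e110 e211 e201 e210 e301 e300 e311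
    -- e100 : A0 * B0 = 1, etc.
    have hA0ne : A0 ≠ 0 := left_ne_zero_of_mul_eq_one e100
    have hB0ne : B0 ≠ 0 := right_ne_zero_of_mul_eq_one e100
    have hD1ne : D1 ≠ 0 := right_ne_zero_of_mul_eq_one e301
    have hB1z : B1 = 0 := by
      rcases mul_eq_zero.mp e101 with hc | hc
      · exact absurd hc hA0ne
      · exact hc
    have hA1z : A1 = 0 := by
      rcases mul_eq_zero.mp e110 with hc | hc
      · exact hc
      · exact absurd hc hB0ne
    have hD0z : D0 = 0 := by
      rcases mul_eq_zero.mp e300 with hc | hc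
      · exact absurd hc hA0ne
      · exact hc
    have hC0z : C0 = 0 := by
      rcases mul_eq_zero.mp e201 with hc | hc
      · exact hc
      · exact absurd hc hD1ne
    have hC1A0 : C1 = A0 := by
      apply mul_right_cancel₀ hD1ne
      rw [e211, e301]
    have hgx : G x₁ = A0 • x₁ := by
      conv_lhs => rw [hrep (G x₁)]
      rw [← hA0, ← hA1, hA1z, zero_smul, add_zero]
    have hgy : G y₁ = A0 • y₁ := by
      conv_lhs => rw [hrep (G y₁)]
      rw [← hC0, ← hC1, hC0z, hC1A0, zero_smul, zero_add]
    have hhx : H x₁ = B0 • x₁ := by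
      conv_lhs => rw [hrep (H x₁)]
      rw [← hB0, ← hB1, hB1z, zero_smul, add_zero]
    have hhy : H y₁ = D1 • y₁ := by
      conv_lhs => rw [hrep (H y₁)]
      rw [← hD0, ← hD1, hD0z, zero_smul, zero_add]
    apply Units.ext
    rw [hcase, Units.val_one]
    apply Module.Basis.ext (b.tensorProduct b)
    rintro ⟨i, j⟩
    rw [Module.Basis.tensorProduct_apply]
    fin_cases i <;> fin_cases j <;>
      simp only [Fin.zero_eta, Fin.mk_one, Fin.isValue, hb0, hb1,
        TensorProduct.map_tmul, Module.End.one_apply, hgx, hgy, hhx, hhy,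
        TensorProduct.smul_tmul', TensorProduct.tmul_smul, smul_smul]
    · rw [mul_comm, e100, one_smul]
    · rw [mul_comm, e301, one_smul]
    · rw [mul_comm, e100, one_smul]
    · rw [mul_comm, e301, one_smul]
  · -- u = (g ⊗ h) ∘ σ : contradiction
    rw [hcase] at hxy hxx
    rw [Module.End.mul_apply, hσapp, TensorProduct.map_tmul] at hxy hxx
    have e1 := key _ _ _ _ hxx
    have e3 := key _ _ _ _ hxy
    have e101 := e1 0 1
    have e301 := e3 0 1
    simp only [← hA0, ← hA1, ← hB0, ← hB1, ← hC0, ← hC1, ← hD0, ← hD1,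
      hrx0, hrx1, hry0, hry1, mul_one, mul_zero, zero_mul, one_mul] at e101 e301
    -- e101 : A0 * B1 = 0 ; e301 : C0 * B1 = 1
    have hA0ne : A0 ≠ 0 := by
      have e100 := e1 0 0
      simp only [← hA0, ← hB0, hrx0, hrx1, mul_one] at e100
      exact left_ne_zero_of_mul_eq_one e100
    have hB1z : B1 = 0 := by
      rcases mul_eq_zero.mp e101 with hc | hc
      · exact absurd hc hA0ne
      · exact hc
    rw [hB1z, mul_zero] at e301
    exact absurd e301 (by norm_num)
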